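/- arXiv:2209.14725 — 4 statements merged into one kernel-verified Lean document; each statement's English description precedes it below -/
import Mathlib

section
/- Let k be an algebraically closed field, A an algebra over k, and let p_1, …, p_n : A^n → A be polynomial maps of positive degree. Suppose H ⊆ A is a finite-dimensional k-subspace such that the leading forms of p_1, …, p_n have no common zero in H^n ∖ {0}, and suppose there is a k-subspace H' ⊆ A with dim(H') ≤ dim(H) and p_i(H^n) ⊆ H' for i = 1, …, n. Then p_1, …, p_n have a common zero in H^n. -/
/-- Monomial maps `A^n → A` over an algebra `A` over `k`, where the (not necessarily
associative, commutative or unital) multiplication of `A` is given as a `k`-bilinear map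
`mul : A →ₗ[k] A →ₗ[k] A`.  They are generated by the constant maps, the coordinate
projections, the multiplication, and closed under composition. -/
inductive IsMonomialMap {k A : Type*} [Field k] [AddCommGroup A] [Module k A]
    (mul : A →ₗ[k] A →ₗ[k] A) : ∀ {n : ℕ}, ((Fin n → A) → A) → Prop
  | const {n : ℕ} (c : A) : IsMonomialMap mul (fun _ : Fin n → A => c)
  | proj {n : ℕ} (i : Fin n) : IsMonomialMap mul (fun a => a i)
  | mul' : IsMonomialMap mul (fun a : Fin 2 → A => mul (a 0) (a 1))
  | comp {n m : ℕ} {q : (Fin m → A) → A} {p : Fin m → ((Fin n → A) → A)} :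
      IsMonomialMap mul q → (∀ i, IsMonomialMap mul (p i)) →
      IsMonomialMap mul (fun a => q (fun i => p i a))

/-- A polynomial map is a finite `k`-linear combination of monomial maps. -/
def IsPolynomialMap {k A : Type*} [Field k] [AddCommGroup A] [Module k A]
    (mul : A →ₗ[k] A →ₗ[k] A) {n : ℕ} (p : (Fin n → A) → A) : Prop :=
  ∃ (m : ℕ) (c : Fin m → k) (q : Fin m → ((Fin n → A) → A)),
    (∀ j, IsMonomialMap mul (q j)) ∧ ∀ a, p a = ∑ j, c j • q j a

/-- A map `A^n → A` is homogeneous of degree `d` (w.r.t. the `k`-structure). -/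
def IsHomogeneousMap (k : Type*) {A : Type*} [Field k] [AddCommGroup A] [Module k A]
    {n : ℕ} (p : (Fin n → A) → A) (d : ℕ) : Prop :=
  ∀ (l : k) (a : Fin n → A), p (fun i => l • a i) = l ^ d • p a

/-- `p` is a polynomial map of degree `d` with leading form `L`:  `L` is a nonzero
homogeneous polynomial map of degree `d`, and `p` is `L` plus a sum of homogeneous
polynomial maps of degree `< d`. -/
def HasLeadingForm {k A : Type*} [Field k] [AddCommGroup A] [Module k A]
    (mul : A →ₗ[k] A →ₗ[k] A) {n : ℕ} (p L : (Fin n → A) → A) (d : ℕ) : Prop :=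
  IsPolynomialMap mul L ∧ IsHomogeneousMap k L d ∧ (∃ a, L a ≠ 0) ∧
    ∃ (m : ℕ) (r : Fin m → ((Fin n → A) → A)) (e : Fin m → ℕ),
      (∀ j, IsPolynomialMap mul (r j)) ∧ (∀ j, IsHomogeneousMap k (r j) (e j)) ∧
      (∀ j, e j < d) ∧ ∀ a, p a = L a + ∑ j, r j a

open MvPolynomial Finset

namespace SysOfEq

variable {k : Type*} [Field k] {A : Type*} [AddCommGroup A] [Module k A] {ι : Type*}

/-- Span of functions of the form `x ↦ (eval x P) • c`. -/
noncomputable def polySpan (k : Type*) [Field k] (A : Type*) [AddCommGroup A] [Module k A]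
    (ι : Type*) : Submodule k ((ι → k) → A) :=
  Submodule.span k {g | ∃ (P : MvPolynomial ι k) (c : A), g = fun x => MvPolynomial.eval x P • c}

lemma mem_polySpan (P : MvPolynomial ι k) (c : A) :
    (fun x : ι → k => MvPolynomial.eval x P • c) ∈ polySpan k A ι :=
  Submodule.subset_span ⟨P, c, rfl⟩

lemma smulEval_mem (P : MvPolynomial ι k) {f : (ι → k) → A} (hf : f ∈ polySpan k A ι) :
    (fun x => MvPolynomial.eval x P • f x) ∈ polySpan k A ι := by
  induction hf using Submodule.span_induction with
  | mem g hg =>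
    obtain ⟨P', c, rfl⟩ := hg
    have : (fun x => MvPolynomial.eval x P • MvPolynomial.eval x P' • c)
        = fun x => MvPolynomial.eval x (P * P') • c := by
      funext x; rw [smul_smul, map_mul]
    rw [this]; exact mem_polySpan _ _
  | zero =>
    have : (fun x : ι → k => MvPolynomial.eval x P • (0 : (ι → k) → A) x) = 0 := by
      funext x; simp
    rw [this]; exact (polySpan k A ι).zero_mem
  | add g g' _ _ hg hg' =>
    have : (fun x => MvPolynomial.eval x P • (g + g') x)
        = (fun x => MvPolynomial.eval x P • g x) + fun x => MvPolynomial.eval x P • g' x := by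
      funext x; simp [smul_add]
    rw [this]; exact Submodule.add_mem _ hg hg'
  | smul a g _ hg =>
    have : (fun x => MvPolynomial.eval x P • (a • g) x)
        = a • fun x => MvPolynomial.eval x P • g x := by
      funext x; rw [Pi.smul_apply, Pi.smul_apply, smul_comm]
    rw [this]; exact Submodule.smul_mem _ _ hg

lemma mul_comp_mem (mul : A →ₗ[k] A →ₗ[k] A) {f g : (ι → k) → A}
    (hf : f ∈ polySpan k A ι) (hg : g ∈ polySpan k A ι) :
    (fun x => mul (f x) (g x)) ∈ polySpan k A ι := by
  induction hf using Submodule.span_induction with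
  | mem f' hf' =>
    obtain ⟨P, c, rfl⟩ := hf'
    have h1 : (fun x => mul (MvPolynomial.eval x P • c) (g x))
        = fun x => MvPolynomial.eval x P • mul c (g x) := by
      funext x; simp
    rw [h1]
    apply smulEval_mem
    clear h1
    induction hg using Submodule.span_induction with
    | mem g' hg' =>
      obtain ⟨P', c', rfl⟩ := hg'
      have : (fun x => mul c (MvPolynomial.eval x P' • c'))
          = fun x => MvPolynomial.eval x P' • mul c c' := by
        funext x; simp
      rw [this]; exact mem_polySpan _ _
    | zero =>
      have : (fun x : ι → k => mul c ((0 : (ι → k) → A) x)) = 0 := by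
        funext x; simp
      rw [this]; exact (polySpan k A ι).zero_mem
    | add g₁ g₂ _ _ h₁ h₂ =>
      have : (fun x => mul c ((g₁ + g₂) x))
          = (fun x => mul c (g₁ x)) + fun x => mul c (g₂ x) := by
        funext x; simp
      rw [this]; exact Submodule.add_mem _ h₁ h₂
    | smul a g₁ _ h₁ =>
      have : (fun x => mul c ((a • g₁) x)) = a • fun x => mul c (g₁ x) := by
        funext x; simp
      rw [this]; exact Submodule.smul_mem _ _ h₁
  | zero =>
    have : (fun x : ι → k => mul ((0 : (ι → k) → A) x) (g x)) = 0 := by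
      funext x; simp
    rw [this]; exact (polySpan k A ι).zero_mem
  | add f₁ f₂ _ _ h₁ h₂ =>
    have : (fun x => mul ((f₁ + f₂) x) (g x))
        = (fun x => mul (f₁ x) (g x)) + fun x => mul (f₂ x) (g x) := by
      funext x; simp
    rw [this]; exact Submodule.add_mem _ h₁ h₂
  | smul a f₁ _ h₁ =>
    have : (fun x => mul ((a • f₁) x) (g x)) = a • fun x => mul (f₁ x) (g x) := by
      funext x; simp
    rw [this]; exact Submodule.smul_mem _ _ h₁


lemma monomial_closure (mul : A →ₗ[k] A →ₗ[k] A) {m : ℕ} {q : (Fin m → A) → A}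
    (hq : IsMonomialMap mul q) :
    ∀ (f : Fin m → ((ι → k) → A)), (∀ i, f i ∈ polySpan k A ι) →
      (fun x => q (fun i => f i x)) ∈ polySpan k A ι := by
  induction hq with
  | const c =>
    intro f hf
    have : (fun x : ι → k => c) = fun x : ι → k => MvPolynomial.eval x (1 : MvPolynomial ι k) • c := by
      funext x; simp
    rw [this]; exact mem_polySpan _ _
  | proj i => intro f hf; exact hf i
  | mul' => intro f hf; exact mul_comp_mem mul (hf 0) (hf 1)
  | comp hq' hp ihq ihp =>
    intro f hf
    exact ihq (fun i => fun x => _ ) (fun i => ihp i f hf)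

lemma poly_closure (mul : A →ₗ[k] A →ₗ[k] A) {m : ℕ} {p : (Fin m → A) → A}
    (hp : IsPolynomialMap mul p) (f : Fin m → ((ι → k) → A)) (hf : ∀ i, f i ∈ polySpan k A ι) :
    (fun x => p (fun i => f i x)) ∈ polySpan k A ι := by
  obtain ⟨m', c, q, hq, hsum⟩ := hp
  have : (fun x => p (fun i => f i x))
      = ∑ j, c j • fun x => q j (fun i => f i x) := by
    funext x
    rw [hsum]
    simp [Finset.sum_apply]
  rw [this]
  exact Submodule.sum_mem _ fun j _ =>
    Submodule.smul_mem _ _ (monomial_closure mul (hq j) f hf)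

lemma exists_mvpoly (ψ : A →ₗ[k] k) {f : (ι → k) → A} (hf : f ∈ polySpan k A ι) :
    ∃ Q : MvPolynomial ι k, ∀ x, MvPolynomial.eval x Q = ψ (f x) := by
  induction hf using Submodule.span_induction with
  | mem g hg =>
    obtain ⟨P, c, rfl⟩ := hg
    exact ⟨ψ c • P, fun x => by simp [mul_comm]⟩
  | zero => exact ⟨0, fun x => by simp⟩
  | add g g' _ _ hg hg' =>
    obtain ⟨Q, hQ⟩ := hg; obtain ⟨Q', hQ'⟩ := hg'
    exact ⟨Q + Q', fun x => by simp [hQ x, hQ' x]⟩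
  | smul a g _ hg =>
    obtain ⟨Q, hQ⟩ := hg
    exact ⟨a • Q, fun x => by simp [hQ x]⟩


lemma eval_mul_of_isHomogeneous {φ : MvPolynomial ι k} {n : ℕ} (hφ : φ.IsHomogeneous n)
    (l : k) (x : ι → k) :
    MvPolynomial.eval (fun i => l * x i) φ = l ^ n * MvPolynomial.eval x φ := by
  conv_lhs => rw [φ.as_sum]
  conv_rhs => rw [φ.as_sum]
  rw [map_sum, map_sum, Finset.mul_sum]
  refine Finset.sum_congr rfl fun d hd => ?_
  have hdeg : d.degree = n := by
    by_contra h
    exact MvPolynomial.mem_support_iff.mp hd (hφ.coeff_eq_zero h)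
  rw [MvPolynomial.eval_monomial, MvPolynomial.eval_monomial]
  have : (d.prod fun i e => (l * x i) ^ e)
      = (d.prod fun i e => l ^ e) * d.prod fun i e => (x i) ^ e := by
    rw [Finsupp.prod, Finsupp.prod, Finsupp.prod, ← Finset.prod_mul_distrib]
    exact Finset.prod_congr rfl fun i _ => mul_pow _ _ _
  rw [this]
  have : (d.prod fun i e => l ^ e) = l ^ n := by
    rw [Finsupp.prod, Finset.prod_pow_eq_pow_sum, ← hdeg, Finsupp.degree]; rfl
  rw [this]; ring

lemma eval_homogeneousComponent_of_funhomog [Infinite k] {Q : MvPolynomial ι k} {d : ℕ}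
    (h : ∀ (l : k) (x : ι → k), MvPolynomial.eval (fun i => l * x i) Q
      = l ^ d * MvPolynomial.eval x Q) (x : ι → k) :
    MvPolynomial.eval x (MvPolynomial.homogeneousComponent d Q) = MvPolynomial.eval x Q := by
  set T := max Q.totalDegree d with hT
  have hTD : Q.totalDegree ≤ T := le_max_left _ _
  have hdT : d ≤ T := le_max_right _ _
  have hsub : Finset.range (Q.totalDegree + 1) ⊆ Finset.range (T + 1) := by
    intro e he; simp only [Finset.mem_range] at he ⊢; omega
  have hsum : ∑ e ∈ Finset.range (T + 1), MvPolynomial.homogeneousComponent e Q = Q := by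
    rw [← Finset.sum_subset hsub (fun e _ he => MvPolynomial.homogeneousComponent_eq_zero e Q
      (by simp only [Finset.mem_range, not_lt] at he; omega))]
    exact MvPolynomial.sum_homogeneousComponent Q
  set p1 : Polynomial k := ∑ e ∈ Finset.range (T + 1),
    Polynomial.C (MvPolynomial.eval x (MvPolynomial.homogeneousComponent e Q)) * Polynomial.X ^ e
    with hp1
  set p2 : Polynomial k := Polynomial.C (MvPolynomial.eval x Q) * Polynomial.X ^ d with hp2
  have hpeq : p1 = p2 := by
    apply Polynomial.funext
    intro l
    have e1 : p1.eval l = ∑ e ∈ Finset.range (T + 1),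
        MvPolynomial.eval x (MvPolynomial.homogeneousComponent e Q) * l ^ e := by
      simp [hp1, Polynomial.eval_finset_sum]
    have e2 : ∀ e, MvPolynomial.eval x (MvPolynomial.homogeneousComponent e Q) * l ^ e
        = MvPolynomial.eval (fun i => l * x i) (MvPolynomial.homogeneousComponent e Q) := by
      intro e
      rw [eval_mul_of_isHomogeneous (MvPolynomial.homogeneousComponent_isHomogeneous e Q) l x]
      ring
    rw [e1, Finset.sum_congr rfl fun e _ => e2 e, ← map_sum, hsum, h l x, hp2,
      Polynomial.eval_mul, Polynomial.eval_C, Polynomial.eval_pow, Polynomial.eval_X]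
    ring
  have c1 : p1.coeff d = MvPolynomial.eval x (MvPolynomial.homogeneousComponent d Q) := by
    rw [hp1, Polynomial.finset_sum_coeff, Finset.sum_eq_single d]
    · simp
    · intro e _ hne
      rw [Polynomial.coeff_C_mul, Polynomial.coeff_X_pow, if_neg (Ne.symm hne), mul_zero]
    · intro hd
      exfalso; apply hd; simp only [Finset.mem_range]; omega
  have c2 : p2.coeff d = MvPolynomial.eval x Q := by
    simp [hp2, Polynomial.coeff_C_mul, Polynomial.coeff_X_pow]
  rw [hpeq, c2] at c1
  exact c1.symm


lemma finsupp_degree_eq {N : ℕ} (γ : Fin N →₀ ℕ) : γ.degree = ∑ i, γ i := by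
  rw [Finsupp.degree]
  exact Finset.sum_subset (Finset.subset_univ _)
    (fun i _ hi => Finsupp.notMem_support_iff.mp hi)

/-- The generating set at degree `t`: products `∏ F^β * ∏ X^α` with `α < m` pointwise
and total degree `t`. -/
def SetB {N r : ℕ} (F : Fin r → MvPolynomial (Fin N) k) (d : Fin r → ℕ)
    (m : Fin N → ℕ) (t : ℕ) : Set (MvPolynomial (Fin N) k) :=
  {P | ∃ (α : Fin N → ℕ) (β : Fin r → ℕ), (∀ i, α i < m i) ∧
    ((∑ i, α i) + ∑ j, β j * d j = t) ∧ P = (∏ j, F j ^ β j) * ∏ i, X i ^ α i}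

lemma mulF_mem {N r : ℕ} {F : Fin r → MvPolynomial (Fin N) k} {d : Fin r → ℕ}
    {m : Fin N → ℕ} (j : Fin r) (t' : ℕ) {Q : MvPolynomial (Fin N) k}
    (hQ : Q ∈ Submodule.span k (SetB F d m t')) :
    Q * F j ∈ Submodule.span k (SetB F d m (t' + d j)) := by
  induction hQ using Submodule.span_induction with
  | mem P hP =>
    obtain ⟨α, β, hα, hdeg, rfl⟩ := hP
    refine Submodule.subset_span ⟨α, fun j' => β j' + if j' = j then 1 else 0, hα, ?_, ?_⟩
    · have : ∑ j', (β j' + if j' = j then 1 else 0) * d j'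
          = (∑ j', β j' * d j') + ∑ j', (if j' = j then 1 else 0) * d j' := by
        rw [← Finset.sum_add_distrib]
        exact Finset.sum_congr rfl fun j' _ => by ring
      rw [this]
      have : (∑ j', (if j' = j then 1 else 0) * d j') = d j := by
        have h' : ∀ j', (if j' = j then 1 else 0) * d j' = if j' = j then d j' else 0 := by
          intro j'; split <;> simp
        rw [Finset.sum_congr rfl fun j' _ => h' j', Finset.sum_ite_eq' Finset.univ j d]
        simp
      omega
    · have hprod : (∏ j', F j' ^ (β j' + if j' = j then 1 else 0))
          = (∏ j', F j' ^ β j') * F j := by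
        have : ∀ j', F j' ^ (β j' + if j' = j then 1 else 0)
            = F j' ^ β j' * (if j' = j then F j' else 1) := by
          intro j'
          rw [pow_add]
          congr 1
          split <;> simp
        rw [Finset.prod_congr rfl fun j' _ => this j', Finset.prod_mul_distrib,
          Finset.prod_ite_eq' Finset.univ j (fun j' => F j')]
        simp
      rw [hprod]
      ring
  | zero => rw [zero_mul]; exact Submodule.zero_mem _
  | add Q₁ Q₂ _ _ h₁ h₂ => rw [add_mul]; exact Submodule.add_mem _ h₁ h₂
  | smul a Q₁ _ h₁ => rw [smul_mul_assoc]; exact Submodule.smul_mem _ _ h₁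

lemma homog_mem_spanB {N r : ℕ} {F : Fin r → MvPolynomial (Fin N) k} {d : Fin r → ℕ}
    {m : Fin N → ℕ} {g' : Fin N → Fin r → MvPolynomial (Fin N) k}
    (hd : ∀ j, 0 < d j) (hm : ∀ i, 0 < m i)
    (hgF : ∀ i, ∑ j, g' i j * F j = X i ^ m i)
    (hg' : ∀ i j, g' i j = 0 ∨ (d j ≤ m i ∧ (g' i j).IsHomogeneous (m i - d j))) :
    ∀ t (P : MvPolynomial (Fin N) k), P.IsHomogeneous t →
      P ∈ Submodule.span k (SetB F d m t) := by
  intro t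
  induction t using Nat.strong_induction_on with
  | _ t IH =>
    intro P hP
    rw [P.as_sum]
    apply Submodule.sum_mem
    intro γ hγ
    have hγdeg : γ.degree = t := by
      by_contra hne
      exact MvPolynomial.mem_support_iff.mp hγ (hP.coeff_eq_zero hne)
    have hmono : (MvPolynomial.monomial γ) (MvPolynomial.coeff γ P)
        = MvPolynomial.coeff γ P • (MvPolynomial.monomial γ) (1 : k) := by
      rw [MvPolynomial.smul_monomial, smul_eq_mul, mul_one]
    rw [hmono]
    apply Submodule.smul_mem
    -- now show `monomial γ 1 ∈ span (SetB t)`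
    by_cases hcase : ∀ i, γ i < m i
    · refine Submodule.subset_span ⟨fun i => γ i, 0, hcase, ?_, ?_⟩
      · simp [← finsupp_degree_eq, hγdeg]
      · have : (MvPolynomial.monomial γ) (1 : k) = ∏ i, MvPolynomial.X i ^ γ i := by
          rw [← MvPolynomial.prod_X_pow_eq_monomial]
          exact Finset.prod_subset (Finset.subset_univ _)
            (fun i _ hi => by rw [Finsupp.notMem_support_iff.mp hi, pow_zero])
        rw [this]
        simp
    · push_neg at hcase
      obtain ⟨i, hi⟩ := hcase
      set γ' : Fin N →₀ ℕ := γ - Finsupp.single i (m i) with hγ'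
      have key1 : ∀ j', γ' j' + (Finsupp.single i (m i)) j' = γ j' := by
        intro j'
        rw [hγ', Finsupp.tsub_apply]
        rcases eq_or_ne i j' with rfl | hne
        · rw [Finsupp.single_eq_same]; omega
        · rw [Finsupp.single_eq_of_ne' hne]; omega
      have key2 : γ' + Finsupp.single i (m i) = γ := by
        ext j'; rw [Finsupp.add_apply]; exact key1 j'
      have hsum1 : (∑ j', γ' j') + m i = ∑ j', γ j' := by
        have hs : ∑ j', (γ' j' + (Finsupp.single i (m i)) j') = ∑ j', γ j' :=
          Finset.sum_congr rfl fun j' _ => key1 j'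
        rw [Finset.sum_add_distrib] at hs
        have hsingle : (∑ j', (Finsupp.single i (m i)) j') = m i := by
          simp [Finsupp.single_apply, Finset.sum_ite_eq']
        rw [hsingle] at hs
        exact hs
      have hmi_t : m i ≤ t := by
        have h1 : γ i ≤ ∑ j', γ j' :=
          Finset.single_le_sum (f := fun j' => γ j') (fun _ _ => Nat.zero_le _)
            (Finset.mem_univ i)
        rw [← finsupp_degree_eq, hγdeg] at h1
        omega
      have hγ'deg : γ'.degree = t - m i := by
        rw [finsupp_degree_eq]
        have := hγdeg
        rw [finsupp_degree_eq] at this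
        omega
      have hmonoeq : (MvPolynomial.monomial γ) (1 : k)
          = (MvPolynomial.monomial γ') 1 * MvPolynomial.X i ^ m i := by
        rw [MvPolynomial.X_pow_eq_monomial, MvPolynomial.monomial_mul, key2, mul_one]
      rw [hmonoeq, ← hgF i, Finset.mul_sum]
      apply Submodule.sum_mem
      intro j _
      rcases hg' i j with h0 | ⟨hdm, hhom⟩
      · rw [h0, zero_mul, mul_zero]
        exact Submodule.zero_mem _
      · have hQhom : ((MvPolynomial.monomial γ') 1 * g' i j).IsHomogeneous
            ((t - m i) + (m i - d j)) :=
          (MvPolynomial.isHomogeneous_monomial _ hγ'deg).mul hhom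
        have harith : (t - m i) + (m i - d j) = t - d j := by omega
        rw [harith] at hQhom
        have hlt : t - d j < t := by
          have := hm i
          have := hd j
          omega
        have hspan := IH (t - d j) hlt _ hQhom
        have hfin := mulF_mem j (t - d j) hspan
        have : t - d j + d j = t := by
          have := hd j
          omega
        rw [this] at hfin
        rw [← mul_assoc]
        exact hfin


/-- Weak projective Nullstellensatz: fewer homogeneous equations (of positive degree) than
variables have a common nontrivial zero over an algebraically closed field. -/
lemma nss [IsAlgClosed k] {N r : ℕ} (hr : r < N)
    (F : Fin r → MvPolynomial (Fin N) k) (d : Fin r → ℕ) (hd : ∀ j, 0 < d j)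
    (hF : ∀ j, (F j).IsHomogeneous (d j)) :
    ∃ x : Fin N → k, x ≠ 0 ∧ ∀ j, MvPolynomial.eval x (F j) = 0 := by
  classical
  have hN : 0 < N := lt_of_le_of_lt (Nat.zero_le r) hr
  rcases Nat.eq_zero_or_pos r with rfl | hrpos
  · refine ⟨fun _ => 1, ?_, fun j => j.elim0⟩
    intro h0
    have := congrFun h0 ⟨0, hN⟩
    simp at this
  by_contra hcon
  push_neg at hcon
  have hzero : ∀ x : Fin N → k, (∀ j, MvPolynomial.eval x (F j) = 0) → x = 0 := by
    intro x hx
    by_contra hxne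
    obtain ⟨j, hj⟩ := hcon x hxne
    exact hj (hx j)
  set I : Ideal (MvPolynomial (Fin N) k) := Ideal.span (Set.range F) with hI
  have hrad : ∀ i : Fin N, ∃ mi : ℕ, 0 < mi ∧ (X i : MvPolynomial (Fin N) k) ^ mi ∈ I := by
    intro i
    have hXi : (X i : MvPolynomial (Fin N) k) ∈ I.radical := by
      rw [← MvPolynomial.vanishingIdeal_zeroLocus_eq_radical (K := k)]
      rw [MvPolynomial.mem_vanishingIdeal_iff]
      intro x hx
      have hx0 : x = 0 := hzero x (fun j => (MvPolynomial.mem_zeroLocus_iff.mp hx) (F j)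
        (Ideal.subset_span ⟨j, rfl⟩))
      subst hx0
      simp
    obtain ⟨mi, hmi⟩ := hXi
    exact ⟨mi + 1, Nat.succ_pos _, by rw [pow_succ]; exact Ideal.mul_mem_right _ _ hmi⟩
  choose mfun hmpos hmem using hrad
  have hrepr : ∀ i, ∃ g : Fin r → MvPolynomial (Fin N) k,
      ∑ j, g j * F j = X i ^ mfun i := by
    intro i
    have h1 : (X i : MvPolynomial (Fin N) k) ^ mfun i
        ∈ Submodule.span (MvPolynomial (Fin N) k) (Set.range F) := hmem i
    rw [Submodule.mem_span_range_iff_exists_fun] at h1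
    obtain ⟨c, hc⟩ := h1
    exact ⟨c, by simpa [smul_eq_mul] using hc⟩
  choose g hg using hrepr
  set g' : Fin N → Fin r → MvPolynomial (Fin N) k := fun i j =>
    ∑ e ∈ Finset.range ((g i j).totalDegree + 1),
      if mfun i = e + d j then MvPolynomial.homogeneousComponent e (g i j) else 0 with hg'def
  have hgF : ∀ i, ∑ j, g' i j * F j = X i ^ mfun i := by
    intro i
    have hXp : (X i ^ mfun i : MvPolynomial (Fin N) k).IsHomogeneous (mfun i) := by
      have := (MvPolynomial.isHomogeneous_X k i).pow (mfun i)
      rwa [one_mul] at this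
    have h0 := congrArg (MvPolynomial.homogeneousComponent (mfun i)) (hg i)
    rw [map_sum] at h0
    have hL : ∀ j, MvPolynomial.homogeneousComponent (mfun i) (g i j * F j) = g' i j * F j := by
      intro j
      conv_lhs => rw [← MvPolynomial.sum_homogeneousComponent (g i j), Finset.sum_mul, map_sum]
      rw [hg'def]
      simp only []
      rw [Finset.sum_mul]
      apply Finset.sum_congr rfl
      intro e _
      rw [MvPolynomial.homogeneousComponent_of_mem
        ((MvPolynomial.mem_homogeneousSubmodule _ _).mpr
          ((MvPolynomial.homogeneousComponent_isHomogeneous e (g i j)).mul (hF j)))]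
      split_ifs with hcond
      · rfl
      · rw [zero_mul]
    have hR : MvPolynomial.homogeneousComponent (mfun i) ((X i : MvPolynomial (Fin N) k) ^ mfun i)
        = X i ^ mfun i := by
      rw [MvPolynomial.homogeneousComponent_of_mem
        ((MvPolynomial.mem_homogeneousSubmodule _ _).mpr hXp)]
      simp
    rw [Finset.sum_congr rfl fun j _ => hL j, hR] at h0
    exact h0
  have hg'hom : ∀ i j, g' i j = 0 ∨ (d j ≤ mfun i ∧ (g' i j).IsHomogeneous (mfun i - d j)) := by
    intro i j
    by_cases hdm : d j ≤ mfun i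
    · right
      refine ⟨hdm, ?_⟩
      rw [hg'def]
      apply MvPolynomial.IsHomogeneous.sum
      intro e _
      split_ifs with h
      · rw [show mfun i - d j = e by omega]
        exact MvPolynomial.homogeneousComponent_isHomogeneous e (g i j)
      · exact MvPolynomial.isHomogeneous_zero _ _ _
    · left
      rw [hg'def]
      apply Finset.sum_eq_zero
      intro e _
      rw [if_neg (by omega)]
  -- counting
  obtain ⟨r', rfl⟩ : ∃ r', r = r' + 1 := ⟨r - 1, by omega⟩
  obtain ⟨N', rfl⟩ : ∃ N', N = N' + 1 := ⟨N - 1, by omega⟩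
  have hN' : 1 ≤ N' := by omega
  have hr' : r' ≤ N' - 1 := by omega
  set M : ℕ := ∏ i, mfun i with hM
  set s : ℕ := M * N' ^ (N' - 1) with hs
  set t : ℕ := N' * s with ht
  set Θ : Type := {ab : ((i : Fin (N' + 1)) → Fin (mfun i)) × (Fin (r' + 1) → Fin (t + 1)) //
    ((∑ i, ((ab.1 i : ℕ))) + ∑ j, (ab.2 j : ℕ) * d j = t)} with hΘ
  set gfun : Θ → MvPolynomial (Fin (N' + 1)) k := fun ab =>
    (∏ j, F j ^ (ab.1.2 j : ℕ)) * ∏ i, X i ^ (ab.1.1 i : ℕ) with hgfun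
  have hsubset : SetB F d mfun t ⊆ Set.range gfun := by
    rintro P ⟨α, β, hα, hdeg, rfl⟩
    have hβ : ∀ j, β j < t + 1 := by
      intro j
      have h1 : β j * d j ≤ ∑ j', β j' * d j' :=
        Finset.single_le_sum (f := fun j' => β j' * d j') (fun _ _ => Nat.zero_le _)
          (Finset.mem_univ j)
      have h2 : β j ≤ β j * d j := Nat.le_mul_of_pos_right _ (hd j)
      omega
    refine ⟨⟨⟨fun i => ⟨α i, hα i⟩, fun j => ⟨β j, hβ j⟩⟩, by simpa using hdeg⟩, by simp [hgfun]⟩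
  have hspan : ∀ δ : Fin N' → Fin (s + 1),
      (MvPolynomial.monomial (Finsupp.equivFunOnFinite.symm
        (Fin.snoc (fun i => (δ i : ℕ)) (t - ∑ i, (δ i : ℕ)) : Fin (N' + 1) → ℕ))) (1 : k)
        ∈ Submodule.span k (Set.range gfun) := by
    intro δ
    have hsumδ : (∑ i, (δ i : ℕ)) ≤ t := by
      calc (∑ i, (δ i : ℕ)) ≤ ∑ _i : Fin N', s :=
            Finset.sum_le_sum (fun i _ => by omega)
        _ = N' * s := by simp [Finset.sum_const, mul_comm]
    have hdeg : (Finsupp.equivFunOnFinite.symm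
        (Fin.snoc (fun i => (δ i : ℕ)) (t - ∑ i, (δ i : ℕ)) : Fin (N' + 1) → ℕ)).degree = t := by
      rw [finsupp_degree_eq]
      simp only [Finsupp.coe_equivFunOnFinite_symm]
      rw [Fin.sum_univ_castSucc]
      simp only [Fin.snoc_castSucc, Fin.snoc_last]
      omega
    exact Submodule.span_mono hsubset
      (homog_mem_spanB hd hmpos hgF hg'hom t _
        (MvPolynomial.isHomogeneous_monomial _ hdeg))
  -- linear independence of the monomial family
  have γinj : Function.Injective (fun δ : Fin N' → Fin (s + 1) =>
      (Finsupp.equivFunOnFinite.symm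
        (Fin.snoc (fun i => (δ i : ℕ)) (t - ∑ i, (δ i : ℕ)) : Fin (N' + 1) → ℕ))) := by
    intro δ δ' hδ
    have h1 := congrArg (fun f => (Finsupp.equivFunOnFinite f : Fin (N' + 1) → ℕ)) hδ
    simp only [Equiv.apply_symm_apply] at h1
    funext i
    have h2 := congrFun h1 (Fin.castSucc i)
    simp only [Fin.snoc_castSucc] at h2
    exact Fin.val_injective h2
  have hli : LinearIndependent k (fun δ : Fin N' → Fin (s + 1) =>
      (MvPolynomial.monomial (Finsupp.equivFunOnFinite.symm
        (Fin.snoc (fun i => (δ i : ℕ)) (t - ∑ i, (δ i : ℕ)) : Fin (N' + 1) → ℕ))) (1 : k)) := by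
    have hcoe : (fun δ : Fin N' → Fin (s + 1) =>
        (MvPolynomial.monomial (Finsupp.equivFunOnFinite.symm
          (Fin.snoc (fun i => (δ i : ℕ)) (t - ∑ i, (δ i : ℕ)) : Fin (N' + 1) → ℕ))) (1 : k))
        = (MvPolynomial.basisMonomials (Fin (N' + 1)) k) ∘ (fun δ =>
          (Finsupp.equivFunOnFinite.symm
            (Fin.snoc (fun i => (δ i : ℕ)) (t - ∑ i, (δ i : ℕ)) : Fin (N' + 1) → ℕ))) := by
      funext δ
      simp [MvPolynomial.coe_basisMonomials]
    rw [hcoe]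
    exact (MvPolynomial.basisMonomials (Fin (N' + 1)) k).linearIndependent.comp _ γinj
  -- cardinality bound
  haveI : FiniteDimensional k (Submodule.span k (Set.range gfun)) :=
    FiniteDimensional.span_of_finite k (Set.finite_range gfun)
  have hcard1 : (s + 1) ^ N' ≤ Module.finrank k (Submodule.span k (Set.range gfun)) := by
    have hli' : LinearIndependent k (fun δ : Fin N' → Fin (s + 1) =>
        (⟨_, hspan δ⟩ : Submodule.span k (Set.range gfun))) := by
      apply LinearIndependent.of_comp (Submodule.span k (Set.range gfun)).subtype
      exact hli
    have := hli'.fintype_card_le_finrank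
    simpa [Fintype.card_fun] using this
  have hcard2 : Module.finrank k (Submodule.span k (Set.range gfun))
      ≤ Fintype.card Θ := by
    have h1 := finrank_span_le_card (R := k) (Set.range gfun)
    have h2 : (Set.range gfun).toFinset.card ≤ Fintype.card Θ := by
      rw [Set.toFinset_range]
      exact le_trans (Finset.card_image_le) (by simp)
    omega
  have hcard3 : Fintype.card Θ ≤ M * (t + 1) ^ r' := by
    have hemb : Function.Injective (fun ab : Θ =>
        (ab.1.1, fun j : Fin r' => ab.1.2 (Fin.castSucc j))) := by
      rintro ⟨⟨α1, β1⟩, h1⟩ ⟨⟨α2, β2⟩, h2⟩ heq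
      dsimp only at h1 h2
      simp only [Prod.mk.injEq] at heq
      obtain ⟨hα, hβ⟩ := heq
      have hβ' : ∀ j : Fin r', β1 (Fin.castSucc j) = β2 (Fin.castSucc j) :=
        fun j => congrFun hβ j
      have hlast : β1 (Fin.last r') = β2 (Fin.last r') := by
        rw [Fin.sum_univ_castSucc (f := fun j => (β1 j : ℕ) * d j)] at h1
        rw [Fin.sum_univ_castSucc (f := fun j => (β2 j : ℕ) * d j)] at h2
        have hs1 : ∑ j : Fin r', (β1 (Fin.castSucc j) : ℕ) * d (Fin.castSucc j)
            = ∑ j : Fin r', (β2 (Fin.castSucc j) : ℕ) * d (Fin.castSucc j) :=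
          Finset.sum_congr rfl fun j _ => by rw [hβ' j]
        have hα1 : (∑ i, (α1 i : ℕ)) = ∑ i, (α2 i : ℕ) := by
          rw [hα]
        have hml : (β1 (Fin.last r') : ℕ) * d (Fin.last r')
            = (β2 (Fin.last r') : ℕ) * d (Fin.last r') := by omega
        have := Nat.eq_of_mul_eq_mul_right (hd (Fin.last r')) hml
        exact Fin.val_injective this
      have : β1 = β2 := by
        funext j
        rcases Fin.eq_castSucc_or_eq_last j with ⟨j', rfl⟩ | rfl
        · exact hβ' j'
        · exact hlast
      apply Subtype.ext
      simp [hα, this]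
    have := Fintype.card_le_of_injective _ hemb
    calc Fintype.card Θ
        ≤ Fintype.card (((i : Fin (N' + 1)) → Fin (mfun i)) × (Fin r' → Fin (t + 1))) := this
      _ = M * (t + 1) ^ r' := by
          simp [Fintype.card_pi, Fintype.card_fun, hM]
  -- arithmetic contradiction
  have A2 : M * (t + 1) ^ r' ≤ M * (t + 1) ^ (N' - 1) :=
    Nat.mul_le_mul_left _ (Nat.pow_le_pow_right (by omega) hr')
  have A3 : t + 1 ≤ N' * (s + 1) := by
    calc t + 1 = N' * s + 1 := by rw [ht]
      _ ≤ N' * s + N' := by omega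
      _ = N' * (s + 1) := by ring
  have A4 : M * (t + 1) ^ (N' - 1) ≤ M * (N' * (s + 1)) ^ (N' - 1) :=
    Nat.mul_le_mul_left _ (Nat.pow_le_pow_left A3 _)
  have A5 : M * (N' * (s + 1)) ^ (N' - 1) = s * (s + 1) ^ (N' - 1) := by
    rw [mul_pow, hs]
    ring
  have A6 : s * (s + 1) ^ (N' - 1) < (s + 1) * (s + 1) ^ (N' - 1) :=
    mul_lt_mul_of_pos_right (Nat.lt_succ_self s) (pow_pos (Nat.succ_pos s) (N' - 1))
  have A7 : (s + 1) * (s + 1) ^ (N' - 1) = (s + 1) ^ N' := by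
    rw [← pow_succ']
    congr 1
    omega
  omega


/-- If `l^d • v + ∑ l^(e j) • w j ∈ H'` for all scalars `l` (with all `e j < d`), then
`v ∈ H'` (over an infinite field). -/
lemma leading_mem_of_forall_smul [Infinite k] {H' : Submodule k A} {dd mm : ℕ}
    {v : A} {w : Fin mm → A} {e : Fin mm → ℕ} (he : ∀ j, e j < dd)
    (hin : ∀ l : k, (l ^ dd • v + ∑ j, l ^ (e j) • w j) ∈ H') : v ∈ H' := by
  set π := H'.mkQ with hπ
  have hq : ∀ l : k, l ^ dd • π v + ∑ j, l ^ (e j) • π (w j) = 0 := by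
    intro l
    have h1 : π (l ^ dd • v + ∑ j, l ^ (e j) • w j) = 0 := by
      rw [Submodule.mkQ_apply, Submodule.Quotient.mk_eq_zero]
      exact hin l
    rw [map_add, map_smul, map_sum] at h1
    simpa [map_smul] using h1
  suffices hv : π v = 0 by
    rwa [hπ, Submodule.mkQ_apply, Submodule.Quotient.mk_eq_zero] at hv
  apply (Module.forall_dual_apply_eq_zero_iff k (π v)).mp
  intro f
  set q : Polynomial k := Polynomial.C (f (π v)) * Polynomial.X ^ dd
    + ∑ j, Polynomial.C (f (π (w j))) * Polynomial.X ^ (e j) with hqdef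
  have heval : ∀ l, q.eval l = 0 := by
    intro l
    have h2 := congrArg f (hq l)
    rw [map_add, map_smul, map_sum, map_zero] at h2
    rw [hqdef]
    simp only [Polynomial.eval_add, Polynomial.eval_finset_sum, Polynomial.eval_mul,
      Polynomial.eval_C, Polynomial.eval_pow, Polynomial.eval_X]
    rw [← h2]
    congr 1
    · rw [smul_eq_mul]; ring
    · apply Finset.sum_congr rfl
      intro j _
      rw [map_smul, smul_eq_mul]
      ring
  have hq0 : q = 0 := Polynomial.zero_of_eval_zero q heval
  have hsum0 : (∑ j, Polynomial.C (f (π (w j))) * Polynomial.X ^ (e j)).coeff dd = 0 := by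
    rw [Polynomial.finset_sum_coeff]
    apply Finset.sum_eq_zero
    intro j _
    rw [Polynomial.coeff_C_mul, Polynomial.coeff_X_pow, if_neg (by have := he j; omega), mul_zero]
  have hc : (Polynomial.C (f (π v)) * Polynomial.X ^ dd).coeff dd
      + (∑ j, Polynomial.C (f (π (w j))) * Polynomial.X ^ (e j)).coeff dd = 0 := by
    rw [← Polynomial.coeff_add, ← hqdef, hq0, Polynomial.coeff_zero]
  rw [Polynomial.coeff_C_mul, Polynomial.coeff_X_pow, if_pos rfl, mul_one, hsum0, add_zero] at hc
  exact hc

end SysOfEq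

open SysOfEq

/-- **Theorem 3.1.** Over an algebraically closed field `k`, polynomial maps
`p₁, …, pₙ : Aⁿ → A` of positive degree, whose leading forms have no common zero in
`Hⁿ \ {0}` for a finite-dimensional subspace `H`, and which map `Hⁿ` into a subspace `H'`
with `dim H' ≤ dim H`, have a common zero in `Hⁿ`. -/
theorem systems_of_equations_alg_closed
    {k A : Type*} [Field k] [IsAlgClosed k] [AddCommGroup A] [Module k A]
    (mul : A →ₗ[k] A →ₗ[k] A) {n : ℕ}
    (p L : Fin n → ((Fin n → A) → A)) (d : Fin n → ℕ)
    (hdeg : ∀ i, 0 < d i)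
    (hlead : ∀ i, HasLeadingForm mul (p i) (L i) (d i))
    (H H' : Submodule k A) [FiniteDimensional k H]
    (hnondeg : ∀ a : Fin n → A, (∀ ℓ, a ℓ ∈ H) → (∀ i, L i a = 0) → a = 0)
    (hdim : Module.rank k H' ≤ Module.rank k H)
    (hmaps : ∀ i, ∀ a : Fin n → A, (∀ ℓ, a ℓ ∈ H) → p i a ∈ H') :
    ∃ a : Fin n → A, (∀ ℓ, a ℓ ∈ H) ∧ ∀ i, p i a = 0 := by
  classical
  rcases Nat.eq_zero_or_pos n with rfl | hn
  · exact ⟨fun i => i.elim0, fun ℓ => ℓ.elim0, fun i => i.elim0⟩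
  haveI hfdH' : FiniteDimensional k H' :=
    Module.rank_lt_aleph0_iff.mp (lt_of_le_of_lt hdim (Module.rank_lt_aleph0 k H))
  set hdimH : ℕ := Module.finrank k H with hh
  set hdimH' : ℕ := Module.finrank k H' with hh'
  have hh'le : hdimH' ≤ hdimH := by
    have h2 := hdim
    rw [← Module.finrank_eq_rank k H, ← Module.finrank_eq_rank k H'] at h2
    exact_mod_cast h2
  set bH := Module.finBasis k H with hbH
  set bH' := Module.finBasis k H' with hbH'
  choose ψ hψspec using fun w : Fin hdimH' => LinearMap.exists_extend (bH'.coord w)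
  have hψval : ∀ w (v : H'), ψ w (v : A) = bH'.coord w v := by
    intro w v
    have := congrArg (fun g => g v) (hψspec w)
    simpa using this
  have hsep : ∀ v : A, v ∈ H' → (∀ w, ψ w v = 0) → v = 0 := by
    intro v hv h0
    have h1 : ∀ w, bH'.coord w ⟨v, hv⟩ = 0 := fun w => by
      rw [← hψval w ⟨v, hv⟩]; exact h0 w
    have h2 := (bH'.forall_coord_eq_zero_iff).mp h1
    exact congrArg Subtype.val h2
  have hLpoly : ∀ i, IsPolynomialMap mul (L i) := fun i => (hlead i).1
  have hLhom : ∀ i, IsHomogeneousMap k (L i) (d i) := fun i => (hlead i).2.1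
  choose mR rR eR hrpoly hrhom hrlt hpeq using fun i => (hlead i).2.2.2
  set av : (Option (Fin n × Fin hdimH) → k) → (Fin n → A) :=
    fun y ℓ => ∑ u, y (some (ℓ, u)) • (bH u : A) with hav
  have havH : ∀ y ℓ, av y ℓ ∈ H := fun y ℓ =>
    Submodule.sum_mem _ fun u _ => Submodule.smul_mem _ _ (bH u).2
  set Ffun : Fin n → ((Option (Fin n × Fin hdimH) → k) → A) := fun i y =>
    L i (av y) + ∑ j, (y none) ^ (d i - eR i j) • rR i j (av y) with hFfun
  have c1 : ∀ i y, y none = 1 → Ffun i y = p i (av y) := by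
    intro i y h1
    rw [hFfun]
    simp only [h1, one_pow, one_smul]
    exact (hpeq i (av y)).symm
  have c2 : ∀ i y, y none = 0 → Ffun i y = L i (av y) := by
    intro i y h0
    rw [hFfun]
    simp only [h0]
    rw [Finset.sum_eq_zero, add_zero]
    intro j _
    rw [zero_pow (by have := hrlt i j; omega), zero_smul]
  have havsmul : ∀ (l : k) y, av (fun v => l * y v) = fun ℓ => l • av y ℓ := by
    intro l y
    funext ℓ
    rw [hav]
    simp only []
    rw [Finset.smul_sum]
    apply Finset.sum_congr rfl
    intro u _
    rw [mul_smul]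
  have c3 : ∀ i (l : k) y, Ffun i (fun v => l * y v) = l ^ d i • Ffun i y := by
    intro i l y
    rw [hFfun]
    simp only []
    rw [havsmul l y, hLhom i l (av y), smul_add]
    congr 1
    rw [Finset.smul_sum]
    apply Finset.sum_congr rfl
    intro j _
    rw [hrhom i j l (av y), mul_pow, smul_smul, smul_smul]
    congr 1
    have hpow : l ^ (d i - eR i j) * l ^ eR i j = l ^ d i := by
      rw [← pow_add]
      congr 1
      have := hrlt i j
      omega
    rw [← hpow]
    ring
  have avmem : ∀ ℓ, (fun y : Option (Fin n × Fin hdimH) → k => av y ℓ)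
      ∈ polySpan k A (Option (Fin n × Fin hdimH)) := by
    intro ℓ
    have heq : (fun y : Option (Fin n × Fin hdimH) → k => av y ℓ)
        = ∑ u, fun y : Option (Fin n × Fin hdimH) → k =>
            MvPolynomial.eval y (MvPolynomial.X (some (ℓ, u))) • (bH u : A) := by
      funext y
      rw [hav]
      simp [MvPolynomial.eval_X, Finset.sum_apply]
    rw [heq]
    exact Submodule.sum_mem _ fun u _ => mem_polySpan _ _
  have Fmem : ∀ i, Ffun i ∈ polySpan k A (Option (Fin n × Fin hdimH)) := by
    intro i
    have h1 : (fun y => L i (av y)) ∈ polySpan k A (Option (Fin n × Fin hdimH)) :=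
      poly_closure mul (hLpoly i) (fun ℓ => fun y => av y ℓ) avmem
    have h2 : ∀ j, (fun y : Option (Fin n × Fin hdimH) → k =>
        (y none) ^ (d i - eR i j) • rR i j (av y))
        ∈ polySpan k A (Option (Fin n × Fin hdimH)) := by
      intro j
      have hr := poly_closure mul (hrpoly i j) (fun ℓ => fun y => av y ℓ) avmem
      have h3 := smulEval_mem (MvPolynomial.X none ^ (d i - eR i j)) hr
      simpa [MvPolynomial.eval_pow, MvPolynomial.eval_X] using h3
    have heq : Ffun i
        = (fun y => L i (av y)) + ∑ j, fun y : Option (Fin n × Fin hdimH) → k =>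
            (y none) ^ (d i - eR i j) • rR i j (av y) := by
      funext y
      rw [hFfun]
      simp [Finset.sum_apply]
    rw [heq]
    exact Submodule.add_mem _ h1 (Submodule.sum_mem _ fun j _ => h2 j)
  have hQall : ∀ iw : Fin n × Fin hdimH', ∃ Q : MvPolynomial (Option (Fin n × Fin hdimH)) k,
      Q.IsHomogeneous (d iw.1) ∧ ∀ y, MvPolynomial.eval y Q = ψ iw.2 (Ffun iw.1 y) := by
    rintro ⟨i, w⟩
    obtain ⟨Q0, hQ0⟩ := exists_mvpoly (ψ w) (Fmem i)
    have hfun : ∀ (l : k) (y : Option (Fin n × Fin hdimH) → k),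
        MvPolynomial.eval (fun v => l * y v) Q0 = l ^ d i * MvPolynomial.eval y Q0 := by
      intro l y
      rw [hQ0, hQ0, c3 i l y, map_smul, smul_eq_mul]
    refine ⟨MvPolynomial.homogeneousComponent (d i) Q0,
      MvPolynomial.homogeneousComponent_isHomogeneous _ _, ?_⟩
    intro y
    rw [eval_homogeneousComponent_of_funhomog hfun y, hQ0]
  choose Qf hQhom hQeval using hQall
  set ec : Option (Fin n × Fin hdimH) ≃ Fin (Fintype.card (Option (Fin n × Fin hdimH))) :=
    Fintype.equivFin _ with hec
  set eθ : (Fin n × Fin hdimH') ≃ Fin (Fintype.card (Fin n × Fin hdimH')) :=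
    Fintype.equivFin _ with heθ
  have hcards : Fintype.card (Fin n × Fin hdimH')
      < Fintype.card (Option (Fin n × Fin hdimH)) := by
    simp only [Fintype.card_option, Fintype.card_prod, Fintype.card_fin]
    have := Nat.mul_le_mul_left n hh'le
    omega
  obtain ⟨x, hxne, hxzero⟩ := nss hcards
    (fun s0 => MvPolynomial.rename ec (Qf (eθ.symm s0)))
    (fun s0 => d (eθ.symm s0).1)
    (fun s0 => hdeg _)
    (fun s0 => (hQhom (eθ.symm s0)).rename_isHomogeneous)
  set y : Option (Fin n × Fin hdimH) → k := x ∘ ec with hy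
  have hyzero : ∀ iw : Fin n × Fin hdimH', ψ iw.2 (Ffun iw.1 y) = 0 := by
    intro iw
    have h1 := hxzero (eθ iw)
    rw [MvPolynomial.eval_rename, Equiv.symm_apply_apply] at h1
    rw [← hQeval iw y]
    exact h1
  have hyne : y ≠ 0 := by
    intro h0
    apply hxne
    funext v
    have hxv : x v = y (ec.symm v) := by rw [hy]; simp
    rw [hxv, h0]; rfl
  by_cases ht0 : y none = 0
  · exfalso
    have hLH' : ∀ i, L i (av y) ∈ H' := by
      intro i
      apply leading_mem_of_forall_smul (w := fun j => rR i j (av y)) (e := eR i) (hrlt i)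
      intro l
      have h1 : p i (fun ℓ => l • av y ℓ) ∈ H' :=
        hmaps i _ (fun ℓ => Submodule.smul_mem _ _ (havH y ℓ))
      rw [hpeq i, hLhom i l (av y),
        Finset.sum_congr rfl (fun j (_ : j ∈ Finset.univ) => hrhom i j l (av y))] at h1
      exact h1
    have hL0 : ∀ i, L i (av y) = 0 := by
      intro i
      apply hsep _ (hLH' i)
      intro w
      have h1 := hyzero (i, w)
      rw [c2 i y ht0] at h1
      exact h1
    have hav0 := hnondeg (av y) (havH y) hL0
    apply hyne
    funext v
    match v with
    | none => exact ht0
    | some (ℓ, u) =>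
      have h3 : av y ℓ = 0 := congrFun hav0 ℓ
      have hli : LinearIndependent k (fun u => (bH u : A)) :=
        bH.linearIndependent.map' H.subtype (Submodule.ker_subtype H)
      exact linearIndependent_iff'.mp hli Finset.univ
        (fun u => y (some (ℓ, u))) h3 u (Finset.mem_univ u)
  · set z : Option (Fin n × Fin hdimH) → k := fun v => (y none)⁻¹ * y v with hz
    have hz1 : z none = 1 := by rw [hz]; exact inv_mul_cancel₀ ht0
    have hrel : ∀ i, Ffun i y = (y none) ^ d i • Ffun i z := by
      intro i
      have h1 := c3 i (y none) z
      have h2 : (fun v => (y none) * z v) = y := by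
        funext v
        rw [hz]
        field_simp
      rw [h2] at h1
      exact h1
    refine ⟨av z, havH z, ?_⟩
    intro i
    have hFz : Ffun i z = p i (av z) := c1 i z hz1
    have hmem' : Ffun i z ∈ H' := by rw [hFz]; exact hmaps i (av z) (havH z)
    rw [← hFz]
    apply hsep _ hmem'
    intro w
    have h1 := hyzero (i, w)
    rw [hrel i, map_smul, smul_eq_mul] at h1
    rcases mul_eq_zero.mp h1 with h | h
    · exact absurd h (pow_ne_zero _ ht0)
    · exact h
end

section
/- Let m_1, m_2 : ℍ → ℍ be maps of the same degree d ≥ 1 of the form m_i(a) = c^{(i)}_0 a c^{(i)}_1 ⋯ a c^{(i)}_d with nonzero quaternion coefficients, and set ‖m_i‖ to be the product of the norms of the coefficients of m_i, so that ‖m_i(a)‖ = ‖m_i‖ · ‖a‖^d for all a ∈ ℍ. Assume ‖m_1‖ ≥ ‖m_2‖ > 0 and that m_1 + m_2 has no zero in ℍ ∖ {0}. Then for every t ∈ [0,1], the map a ↦ m_1(a) + (1−t) m_2(a) has no zero in ℍ ∖ {0}. -/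
open scoped Quaternion

/-- The monomial word `c₀ a c₁ a c₂ ⋯ c_{d-1} a c_d`, with `d` occurrences of `a`
separated by the coefficients `c 0, …, c d`. -/
noncomputable def mword : (d : ℕ) → (Fin (d + 1) → ℍ[ℝ]) → ℍ[ℝ] → ℍ[ℝ]
  | 0, c, _ => c 0
  | d + 1, c, a => c 0 * a * mword d (fun i => c i.succ) a

theorem mword_norm : ∀ (d : ℕ) (c : Fin (d + 1) → ℍ[ℝ]) (a : ℍ[ℝ]),
    ‖mword d c a‖ = (∏ j, ‖c j‖) * ‖a‖ ^ d
  | 0, c, a => by simp [mword]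
  | d + 1, c, a => by
    rw [mword, norm_mul, norm_mul, mword_norm d]
    conv_rhs => rw [Fin.prod_univ_succ]
    ring

/-- If `m₁, m₂` are monomial maps of the same degree `d ≥ 1` with nonzero coefficients,
`‖m₁‖ ≥ ‖m₂‖ > 0` (where `‖mᵢ‖` is the product of the norms of the coefficients), and
`m₁ + m₂` has no zero in `ℍ \ {0}`, then for every `t ∈ [0,1]` the map
`a ↦ m₁(a) + (1 - t) m₂(a)` has no zero in `ℍ \ {0}`. -/
theorem quaternion_two_monomial_homotopy_nondegenerate
    (d : ℕ) (hd : 1 ≤ d)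
    (c₁ c₂ : Fin (d + 1) → ℍ[ℝ])
    (hc₁ : ∀ j, c₁ j ≠ 0) (hc₂ : ∀ j, c₂ j ≠ 0)
    (hnorm₂ : 0 < ∏ j, ‖c₂ j‖)
    (hnorm : ∏ j, ‖c₂ j‖ ≤ ∏ j, ‖c₁ j‖)
    (hnondeg : ∀ a : ℍ[ℝ], a ≠ 0 → mword d c₁ a + mword d c₂ a ≠ 0) :
    ∀ t ∈ Set.Icc (0 : ℝ) 1, ∀ a : ℍ[ℝ], a ≠ 0 →
      mword d c₁ a + (1 - t) • mword d c₂ a ≠ 0 := by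
  intro t ht a ha h
  have hna : (0:ℝ) < ‖a‖ ^ d := pow_pos (norm_pos_iff.mpr ha) d
  set N₁ := ∏ j, ‖c₁ j‖
  set N₂ := ∏ j, ‖c₂ j‖
  have h1 : mword d c₁ a = -((1 - t) • mword d c₂ a) := by
    rw [eq_neg_iff_add_eq_zero]; exact h
  have hn : N₁ * ‖a‖ ^ d = (1 - t) * (N₂ * ‖a‖ ^ d) := by
    have := congrArg norm h1
    rwa [norm_neg, norm_smul, mword_norm, mword_norm, Real.norm_eq_abs,
      abs_of_nonneg (by linarith [ht.2])] at this
  have ht0 : t = 0 := by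
    have h2 : N₁ = (1 - t) * N₂ :=
      mul_right_cancel₀ (ne_of_gt hna) (by rw [hn]; ring)
    nlinarith [ht.1, ht.2]
  rw [ht0] at h
  simp at h
  exact hnondeg a ha h
end

section
/- In the real quaternion algebra ℍ, let c_0 = −1 − i + k, c_1 = −1 − i + j − k, c_2 = −i − j + k, c_3 = −1 + i + j + k, c_4 = 6i, and define p : ℍ → ℍ by p(a) = c_0 a² + a c_1 a + c_2 a c_3 a + c_4. Then p has no zero in ℍ: there is no a ∈ ℍ with p(a) = 0. -/
open scoped Quaternion

/-- The example of Section 4: with `c₀ = −1 − i + k`, `c₁ = −1 − i + j − k`,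
`c₂ = −i − j + k`, `c₃ = −1 + i + j + k`, `c₄ = 6i`, the polynomial map
`p(a) = c₀a² + ac₁a + c₂ac₃a + c₄` has no zero in `ℍ`. -/
theorem quaternion_example_no_zero :
    let c₀ : ℍ[ℝ] := ⟨-1, -1, 0, 1⟩
    let c₁ : ℍ[ℝ] := ⟨-1, -1, 1, -1⟩
    let c₂ : ℍ[ℝ] := ⟨0, -1, -1, 1⟩
    let c₃ : ℍ[ℝ] := ⟨-1, 1, 1, 1⟩
    let c₄ : ℍ[ℝ] := ⟨0, 6, 0, 0⟩
    ∀ a : ℍ[ℝ], c₀ * a ^ 2 + a * c₁ * a + c₂ * a * c₃ * a + c₄ ≠ 0 := by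
  intro c₀ c₁ c₂ c₃ c₄ a heq
  rw [Quaternion.ext_iff] at heq
  simp only [Quaternion.re_add, Quaternion.imI_add, Quaternion.imJ_add, Quaternion.imK_add,
    Quaternion.re_mul, Quaternion.imI_mul, Quaternion.imJ_mul, Quaternion.imK_mul,
    pow_two, Quaternion.re_zero, Quaternion.imI_zero, Quaternion.imJ_zero,
    Quaternion.imK_zero] at heq
  simp only [c₀, c₁, c₂, c₃, c₄] at heq
  obtain ⟨w, x, y, z⟩ := a
  dsimp only at heq
  obtain ⟨h1, h2, h3, h4⟩ := heq
  have H1 : -w^2 + x^2 + y^2 + 5*z^2 + 2*w*x - 4*w*y + 2*w*z - 4*x*y = 0 := by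
    linear_combination h1
  have H2 : -3*w^2 - x^2 - y^2 - z^2 - 2*w*x + 2*w*y + 4*w*z + 4*x*z + 4*y*z + 6 = 0 := by
    linear_combination h2
  have H3 : 4*w^2 + 2*w*x - 2*w*y + 2*w*z - 4*x*z = 0 := by
    linear_combination h3
  have H4 : -w^2 - 3*x^2 + y^2 + z^2 - 4*w*x - 2*w*y - 6*w*z = 0 := by
    linear_combination h4
  clear h1 h2 h3 h4
  have key : 9585*(w^2 + x^2 + y^2 + z^2)^2 =
      -(214180*(z^2)^2 + 1180*(y^2)^2 + 389400*(x*z)^2 + 298000*(x*y)^2 + 297940*(x^2)^2 +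
        858600*(w*z)^2 + 277980*(w*x)^2 + 93320*(z^2 + y*z)^2) := by
    linear_combination ((120923)*z*z + (46660)*y*z + (67083)*y*y + (-268938)*x*z +
        (-169490)*x*y + (-370739)*x*x + (-174264)*w*z + (-154560)*w*y + (52142)*w*x +
        (-9585)*w*w) * H1 +
      ((-322748)*z*z + (-223330)*y*z + (-100470)*y*y + (-376210)*x*z + (315598)*x*y +
        (-107508)*x*x + (-151326)*w*z + (-20896)*w*y + (17828)*w*x) * H3 +
      ((-287530)*z*z + (-46660)*y*z + (-56318)*y*y + (53698)*x*z + (437822)*x*y +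
        (-226088)*x*x + (-450210)*w*z + (109316)*w*y) * H4
  have hnorm : (w^2 + x^2 + y^2 + z^2)^2 ≤ 0 := by
    nlinarith [key, sq_nonneg (z^2), sq_nonneg (y^2), sq_nonneg (x*z), sq_nonneg (x*y),
      sq_nonneg (x^2), sq_nonneg (w*z), sq_nonneg (w*x), sq_nonneg (z^2 + y*z)]
  clear H1 H3 H4 key
  have h0 : (w^2 + x^2 + y^2 + z^2)^2 = 0 := le_antisymm hnorm (sq_nonneg _)
  have hs : w^2 + x^2 + y^2 + z^2 = 0 := pow_eq_zero_iff two_ne_zero |>.mp h0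
  clear hnorm h0
  have hw : w = 0 := by nlinarith [sq_nonneg w, sq_nonneg x, sq_nonneg y, sq_nonneg z]
  have hx : x = 0 := by nlinarith [sq_nonneg w, sq_nonneg x, sq_nonneg y, sq_nonneg z]
  have hy : y = 0 := by nlinarith [sq_nonneg w, sq_nonneg x, sq_nonneg y, sq_nonneg z]
  have hz : z = 0 := by nlinarith [sq_nonneg w, sq_nonneg x, sq_nonneg y, sq_nonneg z]
  rw [hw, hx, hy, hz] at H2
  norm_num at H2
end

section
/- Let c_0, c_1 ∈ ℍ. The ℝ-linear map ℓ : ℍ → ℍ, x ↦ c_0 x + x c_1, is degenerate (i.e., there exists x ∈ ℍ ∖ {0} with c_0 x + x c_1 = 0) if and only if Re(c_0) = −Re(c_1) and ‖Im(c_0)‖ = ‖Im(c_1)‖, i.e. writing c_i = c_{i1} + c_{i2} i + c_{i3} j + c_{i4} k, if and only if c_{01} = −c_{11} and c_{02}² + c_{03}² + c_{04}² = c_{12}² + c_{13}² + c_{14}². -/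
open scoped Quaternion
open Quaternion

private lemma re_mul_comm' (a b : ℍ[ℝ]) : (a * b).re = (b * a).re := by
  simp only [Quaternion.re_mul]; ring

private def qmk (a b c d : ℝ) : ℍ[ℝ] := ⟨a, b, c, d⟩

@[simp] private lemma qmk_re (a b c d : ℝ) : (qmk a b c d).re = a := rfl
@[simp] private lemma qmk_imI (a b c d : ℝ) : (qmk a b c d).imI = b := rfl
@[simp] private lemma qmk_imJ (a b c d : ℝ) : (qmk a b c d).imJ = c := rfl
@[simp] private lemma qmk_imK (a b c d : ℝ) : (qmk a b c d).imK = d := rfl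

/-- For `c₀, c₁ ∈ ℍ`, the linear map `x ↦ c₀x + xc₁` is degenerate (has a nonzero zero)
iff `Re(c₀) = −Re(c₁)` and the imaginary parts of `c₀` and `c₁` have the same Euclidean
norm, i.e. `c₀.imI² + c₀.imJ² + c₀.imK² = c₁.imI² + c₁.imJ² + c₁.imK²`. -/
theorem quaternion_linear_form_degenerate_iff (c₀ c₁ : ℍ[ℝ]) :
    (∃ x : ℍ[ℝ], x ≠ 0 ∧ c₀ * x + x * c₁ = 0) ↔
      (c₀.re = -c₁.re ∧
        c₀.imI ^ 2 + c₀.imJ ^ 2 + c₀.imK ^ 2 = c₁.imI ^ 2 + c₁.imJ ^ 2 + c₁.imK ^ 2) := by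
  constructor
  · rintro ⟨x, hx, hEq⟩
    have hn : normSq x ≠ 0 := normSq_ne_zero.2 hx
    have h1 : c₀ * x = -(x * c₁) := eq_neg_of_add_eq_zero_left hEq
    have hN : normSq c₀ = normSq c₁ := by
      have h := congrArg normSq h1
      simp only [map_mul, normSq_neg] at h
      exact mul_right_cancel₀ hn (h.trans (mul_comm (normSq x) (normSq c₁)))
    have h2 : c₀ * (↑(normSq x) : ℍ[ℝ]) = -(x * c₁ * star x) := by
      rw [← self_mul_star, ← mul_assoc, h1, neg_mul]
    have h3 : (c₀ * (↑(normSq x) : ℍ[ℝ])).re = c₀.re * normSq x := by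
      simp [Quaternion.re_mul]
    have h4 : (x * c₁ * star x).re = c₁.re * normSq x := by
      rw [mul_assoc, re_mul_comm' x (c₁ * star x), mul_assoc, star_mul_self]
      simp [Quaternion.re_mul]
    have h5 : c₀.re * normSq x = -(c₁.re * normSq x) := by
      rw [← h3, ← h4, h2, Quaternion.re_neg]
    have h6 : (c₀.re + c₁.re) * normSq x = 0 := by ring_nf; linarith [h5]
    have hre : c₀.re = -c₁.re := by
      rcases mul_eq_zero.mp h6 with h | h
      · linarith
      · exact absurd h hn
    refine ⟨hre, ?_⟩
    rw [normSq_def', normSq_def'] at hN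
    have : c₀.re ^ 2 = c₁.re ^ 2 := by rw [hre]; ring
    linarith
  · rintro ⟨h1, h2⟩
    by_cases hA : c₀.imI = c₁.imI ∧ c₀.imJ = c₁.imJ ∧ c₀.imK = c₁.imK
    · obtain ⟨e1, e2, e3⟩ := hA
      by_cases hB : c₀.imI = 0 ∧ c₀.imJ = 0
      · have f1 : c₁.imI = 0 := by rw [← e1]; exact hB.1
        have f2 : c₁.imJ = 0 := by rw [← e2]; exact hB.2
        by_cases hK : c₀.imK = 0
        · have f3 : c₁.imK = 0 := by rw [← e3]; exact hK
          refine ⟨1, one_ne_zero, ?_⟩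
          ext <;>
            simp [Quaternion.re_mul, Quaternion.imI_mul, Quaternion.imJ_mul,
              Quaternion.imK_mul, h1, hB.1, hB.2, hK, f1, f2, f3]
        · refine ⟨qmk 0 1 0 0, ?_, ?_⟩
          · intro h
            simpa using congrArg QuaternionAlgebra.imI h
          · ext <;>
              simp only [Quaternion.re_mul, Quaternion.imI_mul, Quaternion.imJ_mul,
                Quaternion.imK_mul, Quaternion.re_add, Quaternion.imI_add,
                Quaternion.imJ_add, Quaternion.imK_add, Quaternion.re_zero,
                Quaternion.imI_zero, Quaternion.imJ_zero, Quaternion.imK_zero,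
                h1, hB.1, hB.2, f1, f2, e3, qmk_re, qmk_imI, qmk_imJ, qmk_imK] <;>
              ring
      · refine ⟨qmk 0 (-c₀.imJ) c₀.imI 0, ?_, ?_⟩
        · intro h
          apply hB
          have hi := congrArg QuaternionAlgebra.imI h
          have hj := congrArg QuaternionAlgebra.imJ h
          simp only [Quaternion.imI_zero, Quaternion.imJ_zero, qmk_re, qmk_imI, qmk_imJ, qmk_imK] at hi hj
          constructor
          · simpa using hj
          · simpa using hi
        · ext <;>
            simp only [Quaternion.re_mul, Quaternion.imI_mul, Quaternion.imJ_mul,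
              Quaternion.imK_mul, Quaternion.re_add, Quaternion.imI_add,
              Quaternion.imJ_add, Quaternion.imK_add, Quaternion.re_zero,
              Quaternion.imI_zero, Quaternion.imJ_zero, Quaternion.imK_zero,
              h1, e1, e2, e3, qmk_re, qmk_imI, qmk_imJ, qmk_imK] <;>
            ring1
    · refine ⟨qmk 0 (c₀.imI - c₁.imI) (c₀.imJ - c₁.imJ) (c₀.imK - c₁.imK), ?_, ?_⟩
      · intro h
        apply hA
        have hi := congrArg QuaternionAlgebra.imI h
        have hj := congrArg QuaternionAlgebra.imJ h
        have hk := congrArg QuaternionAlgebra.imK h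
        simp only [Quaternion.imI_zero, Quaternion.imJ_zero, Quaternion.imK_zero, qmk_re, qmk_imI, qmk_imJ, qmk_imK] at hi hj hk
        exact ⟨by linarith, by linarith, by linarith⟩
      · ext <;>
          simp only [Quaternion.re_mul, Quaternion.imI_mul, Quaternion.imJ_mul,
            Quaternion.imK_mul, Quaternion.re_add, Quaternion.imI_add,
            Quaternion.imJ_add, Quaternion.imK_add, Quaternion.re_zero,
            Quaternion.imI_zero, Quaternion.imJ_zero, Quaternion.imK_zero,
            h1, qmk_re, qmk_imI, qmk_imJ, qmk_imK] <;>
          first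
            | ring1
            | (ring_nf; linarith [h2])
end
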